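/- Let p be a prime, a ≥ 1, and n = p^a. Let the group ZMod n act on finite subsets S ⊆ ZMod n by translation, S ↦ S + k. If S is a subset with 0 < |S| < n, then the cardinality of the orbit {S + k : k ∈ ZMod n} of S under this action is divisible by p. -/

import Mathlib

open Pointwise

theorem orbit_card_dvd_of_translation_action (p a : ℕ) (hp : p.Prime) (ha : 1 ≤ a)
    (n : ℕ) (hn : n = p ^ a)
    (S : Finset (ZMod n)) (h1 : 0 < S.card) (h2 : S.card < n) :
    p ∣ ({T : Finset (ZMod n) | ∃ k : ZMod n, T = S.image (fun s => s + k)} : Set (Finset (ZMod n))).ncard := by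
  subst hn
  have hpos : 0 < p ^ a := pow_pos hp.pos a
  haveI : NeZero (p ^ a) := ⟨hpos.ne'⟩
  have horb : ({T : Finset (ZMod (p ^ a)) | ∃ k : ZMod (p ^ a), T = S.image (fun s => s + k)} :
      Set (Finset (ZMod (p ^ a)))) = AddAction.orbit (ZMod (p ^ a)) S := by
    ext T
    simp only [Set.mem_setOf_eq, AddAction.mem_orbit_iff]
    constructor
    · rintro ⟨k, rfl⟩
      refine ⟨k, ?_⟩
      ext x
      simp only [Finset.mem_vadd_finset, Finset.mem_image, vadd_eq_add]
      constructor
      · rintro ⟨y, hy, rfl⟩; exact ⟨y, hy, add_comm y k⟩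
      · rintro ⟨y, hy, rfl⟩; exact ⟨y, hy, add_comm k y⟩
    · rintro ⟨k, rfl⟩
      refine ⟨k, ?_⟩
      ext x
      simp only [Finset.mem_vadd_finset, Finset.mem_image, vadd_eq_add]
      constructor
      · rintro ⟨y, hy, rfl⟩; exact ⟨y, hy, add_comm y k⟩
      · rintro ⟨y, hy, rfl⟩; exact ⟨y, hy, add_comm k y⟩
  rw [horb]
  haveI : Fintype ↑(AddAction.orbit (ZMod (p ^ a)) S) := Fintype.ofFinite _
  haveI : Fintype ↑(AddAction.stabilizer (ZMod (p ^ a)) S) := Fintype.ofFinite _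
  have hcard : Fintype.card (AddAction.orbit (ZMod (p ^ a)) S) *
      Fintype.card (AddAction.stabilizer (ZMod (p ^ a)) S) = Fintype.card (ZMod (p ^ a)) :=
    AddAction.card_orbit_mul_card_stabilizer_eq_card_addGroup (ZMod (p ^ a)) S
  rw [ZMod.card] at hcard
  have hdvd : Fintype.card (AddAction.orbit (ZMod (p ^ a)) S) ∣ p ^ a := ⟨_, hcard.symm⟩
  obtain ⟨c, hc, hcval⟩ := (Nat.dvd_prime_pow hp).mp hdvd
  have hne1 : Fintype.card (AddAction.orbit (ZMod (p ^ a)) S) ≠ 1 := by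
    intro hone
    obtain ⟨⟨x, hx⟩, hall⟩ := Fintype.card_eq_one_iff.mp hone
    have hfix : ∀ k : ZMod (p ^ a), k +ᵥ S = S := by
      intro k
      have h1' := hall ⟨k +ᵥ S, AddAction.mem_orbit S k⟩
      have h2' := hall ⟨S, AddAction.mem_orbit_self S⟩
      have := h1'.trans h2'.symm
      exact Subtype.ext_iff.mp this
    obtain ⟨s, hs⟩ := Finset.card_pos.mp h1
    have : S = Finset.univ := by
      ext x
      simp only [Finset.mem_univ, iff_true]
      have := hfix (x - s)
      rw [← this]
      rw [Finset.mem_vadd_finset]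
      exact ⟨s, hs, by simp [vadd_eq_add]⟩
    rw [this, Finset.card_univ, ZMod.card] at h2
    exact lt_irrefl _ h2
  have hc0 : c ≠ 0 := by rintro rfl; rw [pow_zero] at hcval; exact hne1 hcval
  have : p ∣ Fintype.card (AddAction.orbit (ZMod (p ^ a)) S) := by
    rw [hcval]; exact dvd_pow_self p hc0
  rwa [Set.ncard_eq_toFinset_card', Set.toFinset_card]
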